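/- The function Φ(κ, ν) = ν·(1 - (1 - 1/ν)^κ), viewed as a function of real ν ≥ 1 for fixed positive integer κ, is concave in ν. -/

import Mathlib

/-- For fixed integer `κ ≥ 1`, `ν ↦ ν(1-(1-1/ν)^κ)` is concave on `ν ≥ 1`. -/
theorem stmt_4 (κ : ℕ) (hκ : 1 ≤ κ) (ν₁ ν₂ t : ℝ)
    (h₁ : 1 ≤ ν₁) (h₂ : 1 ≤ ν₂) (ht : t ∈ Set.Icc (0:ℝ) 1) :
    t * (ν₁ * (1 - (1 - 1/ν₁) ^ κ)) + (1 - t) * (ν₂ * (1 - (1 - 1/ν₂) ^ κ))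
      ≤ (t * ν₁ + (1 - t) * ν₂) * (1 - (1 - 1/(t * ν₁ + (1 - t) * ν₂)) ^ κ) := by
  obtain ⟨ht0, ht1⟩ := ht
  set ν : ℝ := t * ν₁ + (1 - t) * ν₂ with hνdef
  have hp₁ : (0:ℝ) < ν₁ := lt_of_lt_of_le one_pos h₁
  have hp₂ : (0:ℝ) < ν₂ := lt_of_lt_of_le one_pos h₂
  have hν1 : (1:ℝ) ≤ ν := by nlinarith
  have hνpos : (0:ℝ) < ν := lt_of_lt_of_le one_pos hν1
  have hx₁ : (1 - 1/ν₁) ∈ Set.Ici (0:ℝ) := by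
    simp only [Set.mem_Ici, sub_nonneg]
    exact div_le_one_of_le₀ h₁ hp₁.le
  have hx₂ : (1 - 1/ν₂) ∈ Set.Ici (0:ℝ) := by
    simp only [Set.mem_Ici, sub_nonneg]
    exact div_le_one_of_le₀ h₂ hp₂.le
  have ha : 0 ≤ t * ν₁ / ν := by positivity
  have hb : 0 ≤ (1 - t) * ν₂ / ν := by
    apply div_nonneg _ hνpos.le
    exact mul_nonneg (by linarith) hp₂.le
  have hab : t * ν₁ / ν + (1 - t) * ν₂ / ν = 1 := by
    field_simp
    exact hνdef.symm
  have key := (convexOn_pow κ).2 hx₁ hx₂ ha hb hab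
  have hcomb : (t * ν₁ / ν) • (1 - 1/ν₁) + ((1 - t) * ν₂ / ν) • (1 - 1/ν₂)
      = 1 - 1/ν := by
    simp only [smul_eq_mul]
    field_simp
    ring
  rw [hcomb] at key
  simp only [smul_eq_mul] at key
  have key2 : ν * (1 - 1/ν) ^ κ
      ≤ t * ν₁ * (1 - 1/ν₁) ^ κ + (1 - t) * ν₂ * (1 - 1/ν₂) ^ κ := by
    have := mul_le_mul_of_nonneg_left key hνpos.le
    calc ν * (1 - 1/ν) ^ κ
        ≤ ν * (t * ν₁ / ν * (1 - 1/ν₁) ^ κ + (1 - t) * ν₂ / ν * (1 - 1/ν₂) ^ κ) := this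
      _ = t * ν₁ * (1 - 1/ν₁) ^ κ + (1 - t) * ν₂ * (1 - 1/ν₂) ^ κ := by
          field_simp
  nlinarith [key2]
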